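/- Let G be a group and A₀ ⊇ A₁ ⊇ A₂ ⊇ ⋯ a descending chain of subgroups, regarded as an inverse sequence (⋯ ↪ A₁ ↪ A₀) with the inclusions as bonding maps. Then there is a bijection between the derived limit lim¹ Aᵢ and the orbit set A₀ \ lim(A₀/Aᵢ) of the action of A₀ by left translations on the inverse limit of the coset spaces A₀/Aᵢ (with the natural projections A₀/Aᵢ₊₁ → A₀/Aᵢ as bonding maps); the bijection sends the class of (g₀,g₁,g₂,…) ∈ ∏ᵢ Aᵢ to the orbit of the thread (g₀A₁, g₀g₁A₂, g₀g₁g₂A₃, …). -/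

import Mathlib

namespace Lim1Chain

variable {G : Type} [Group G]

/-- In a descending chain of subgroups, every `A i` is contained in `A 0`. -/
theorem chainLe (A : ℕ → Subgroup G) (hA : ∀ i, A (i + 1) ≤ A i) :
    ∀ i, A i ≤ A 0
  | 0 => le_rfl
  | i + 1 => (hA i).trans (chainLe A hA i)

/-- The orbit relation on `∏ᵢ Aᵢ` whose orbit set is the derived limit `lim¹ Aᵢ` of
the chain `⋯ ↪ A₁ ↪ A₀` (the bonding maps being the inclusions):
`(g₀,g₁,…)·(x₀,x₁,…) = (x₀⁻¹g₀x₁, x₁⁻¹g₁x₂, …)`. -/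
def chainRel (A : ℕ → Subgroup G) (g g' : ∀ i, ↥(A i)) : Prop :=
  ∃ x : ∀ i, ↥(A i), ∀ i,
    (g' i : G) = (x i : G)⁻¹ * (g i : G) * (x (i + 1) : G)

/-- The coset space `A₀/Aᵢ`. -/
abbrev CosetSp (A : ℕ → Subgroup G) (i : ℕ) : Type :=
  ↥(A 0) ⧸ (A i).subgroupOf (A 0)

/-- The natural projection `A₀/Aᵢ₊₁ → A₀/Aᵢ`. -/
def proj (A : ℕ → Subgroup G) (hA : ∀ i, A (i + 1) ≤ A i) (i : ℕ) :
    CosetSp A (i + 1) → CosetSp A i :=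
  Quotient.map' id (fun a b hab => by
    rw [QuotientGroup.leftRel_apply] at hab ⊢
    rw [Subgroup.mem_subgroupOf] at hab ⊢
    exact hA i hab)

/-- The inverse limit `lim A₀/Aᵢ` of the coset spaces. -/
def LimCosets (A : ℕ → Subgroup G) (hA : ∀ i, A (i + 1) ≤ A i) : Type :=
  {c : ∀ i, CosetSp A i // ∀ i, proj A hA i (c (i + 1)) = c i}

/-- The orbit relation of the action of `A₀` on `lim A₀/Aᵢ` by left translations. -/
def orbitRel (A : ℕ → Subgroup G) (hA : ∀ i, A (i + 1) ≤ A i)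
    (c c' : LimCosets A hA) : Prop :=
  ∃ a : ↥(A 0), ∀ i, a • c.1 i = c'.1 i

/-- The partial products `g₀g₁⋯gᵢ₋₁ ∈ A₀` of a sequence `(g₀,g₁,…) ∈ ∏ᵢ Aᵢ`. -/
def partialProd (A : ℕ → Subgroup G) (hA : ∀ i, A (i + 1) ≤ A i)
    (g : ∀ i, ↥(A i)) : ℕ → ↥(A 0)
  | 0 => 1
  | i + 1 => partialProd A hA g i * ⟨(g i : G), chainLe A hA i (g i).2⟩

/-- The thread `(A₀, g₀A₁, g₀g₁A₂, g₀g₁g₂A₃, …) ∈ lim A₀/Aᵢ` associated to a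
sequence `(g₀,g₁,…) ∈ ∏ᵢ Aᵢ`. -/
def threadOf (A : ℕ → Subgroup G) (hA : ∀ i, A (i + 1) ≤ A i)
    (g : ∀ i, ↥(A i)) : LimCosets A hA :=
  ⟨fun i => (Quotient.mk'' (partialProd A hA g i) : CosetSp A i), fun i => by
    refine Quotient.sound' ?_
    rw [QuotientGroup.leftRel_apply, Subgroup.mem_subgroupOf]
    show (((partialProd A hA g (i + 1) : ↥(A 0)))⁻¹ * partialProd A hA g i : G) ∈ A i
    have h : partialProd A hA g (i + 1)
        = partialProd A hA g i * ⟨(g i : G), chainLe A hA i (g i).2⟩ := rfl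
    rw [h]
    push_cast
    rw [mul_inv_rev, mul_assoc, inv_mul_cancel, mul_one]
    exact inv_mem (g i).2⟩

end Lim1Chain


namespace Lim1Chain

variable {G : Type} [Group G] (A : ℕ → Subgroup G) (hA : ∀ i, A (i + 1) ≤ A i)

lemma pp_coe_succ (g : ∀ i, ↥(A i)) (i : ℕ) :
    (partialProd A hA g (i + 1) : G) = (partialProd A hA g i : G) * (g i : G) := rfl

lemma pp_coe_zero (g : ∀ i, ↥(A i)) : (partialProd A hA g 0 : G) = 1 := rfl

lemma orbitRel_equivalence : Equivalence (orbitRel A hA) := by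
  constructor
  · intro c; exact ⟨1, fun i => one_smul _ _⟩
  · rintro c c' ⟨a, h⟩
    exact ⟨a⁻¹, fun i => by rw [← h i, inv_smul_smul]⟩
  · rintro c c' c'' ⟨a, h⟩ ⟨b, h'⟩
    exact ⟨b * a, fun i => by rw [mul_smul, h i, h' i]⟩

lemma thread_smul (g : ∀ i, ↥(A i)) (a : ↥(A 0)) (i : ℕ) :
    a • (threadOf A hA g).1 i
      = (QuotientGroup.mk (a * partialProd A hA g i) : CosetSp A i) := rfl

lemma thread_rel_of_chainRel (g g' : ∀ i, ↥(A i)) (h : chainRel A g g') :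
    orbitRel A hA (threadOf A hA g) (threadOf A hA g') := by
  obtain ⟨x, hx⟩ := h
  have key : ∀ i, (partialProd A hA g' i : G)
      = (x 0 : G)⁻¹ * (partialProd A hA g i : G) * (x i : G) := by
    intro i; induction i with
    | zero => simp [pp_coe_zero]
    | succ i ih => rw [pp_coe_succ, pp_coe_succ, ih, hx i]; group
  refine ⟨(x 0)⁻¹, fun i => ?_⟩
  rw [thread_smul]
  show _ = (QuotientGroup.mk (partialProd A hA g' i) : CosetSp A i)
  rw [QuotientGroup.eq, Subgroup.mem_subgroupOf]
  have : ((((x 0)⁻¹ * partialProd A hA g i : ↥(A 0)) : G))⁻¹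
      * ((partialProd A hA g' i : ↥(A 0)) : G) = (x i : G) := by
    push_cast [key i]; group
  rw [show (((((x 0)⁻¹ * partialProd A hA g i : ↥(A 0)))⁻¹
      * (partialProd A hA g' i) : ↥(A 0)) : G)
    = ((((x 0)⁻¹ * partialProd A hA g i : ↥(A 0)) : G))⁻¹
      * ((partialProd A hA g' i : ↥(A 0)) : G) by push_cast; ring_nf, this]
  exact (x i).2

lemma chainRel_of_thread_rel (g g' : ∀ i, ↥(A i))
    (h : orbitRel A hA (threadOf A hA g) (threadOf A hA g')) :
    chainRel A g g' := by
  obtain ⟨a, h⟩ := h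
  have hmem : ∀ i, (partialProd A hA g i : G)⁻¹ * (a : G)⁻¹
      * (partialProd A hA g' i : G) ∈ A i := by
    intro i
    have hi := h i
    rw [thread_smul] at hi
    rw [show (threadOf A hA g').1 i
        = (QuotientGroup.mk (partialProd A hA g' i) : CosetSp A i) from rfl,
      QuotientGroup.eq, Subgroup.mem_subgroupOf] at hi
    have e : ((((a * partialProd A hA g i : ↥(A 0)))⁻¹
        * (partialProd A hA g' i) : ↥(A 0)) : G)
      = (partialProd A hA g i : G)⁻¹ * (a : G)⁻¹ * (partialProd A hA g' i : G) := by
      push_cast; group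
    rwa [e] at hi
  refine ⟨fun i => ⟨_, hmem i⟩, fun i => ?_⟩
  have hg : (g i : G) = (partialProd A hA g i : G)⁻¹ * (partialProd A hA g (i + 1) : G) := by
    rw [pp_coe_succ]; group
  have hg' : (g' i : G) = (partialProd A hA g' i : G)⁻¹ * (partialProd A hA g' (i + 1) : G) := by
    rw [pp_coe_succ]; group
  show (g' i : G) = ((partialProd A hA g i : G)⁻¹ * (a : G)⁻¹
      * (partialProd A hA g' i : G))⁻¹ * (g i : G) * _
  rw [hg, hg']; group

lemma thread_surj (c : LimCosets A hA) :
    ∃ g : ∀ i, ↥(A i), orbitRel A hA (threadOf A hA g) c := by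
  set p : ∀ i, ↥(A 0) := fun i => Quotient.out (c.1 i) with hpdef
  have hp : ∀ i, (QuotientGroup.mk (p i) : CosetSp A i) = c.1 i := fun i =>
    Quotient.out_eq' _
  have hmem : ∀ i, (p i : G)⁻¹ * (p (i + 1) : G) ∈ A i := by
    intro i
    have h2 : proj A hA i (c.1 (i + 1)) = c.1 i := c.2 i
    rw [← hp i, ← hp (i + 1)] at h2
    have h3 : (QuotientGroup.mk (p (i + 1)) : CosetSp A i)
        = QuotientGroup.mk (p i) := h2
    rw [QuotientGroup.eq, Subgroup.mem_subgroupOf] at h3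
    have := inv_mem h3
    simpa [mul_inv_rev] using this
  refine ⟨fun i => ⟨_, hmem i⟩, (p 0), fun i => ?_⟩
  set g : ∀ i, ↥(A i) := fun i => ⟨(p i : G)⁻¹ * (p (i + 1) : G), hmem i⟩ with hgdef
  have hP : ∀ i, (partialProd A hA g i : G) = (p 0 : G)⁻¹ * (p i : G) := by
    intro i; induction i with
    | zero => simp [pp_coe_zero]
    | succ i ih => rw [pp_coe_succ, ih]; show _ = _; simp [hgdef, mul_assoc]
  rw [thread_smul, ← hp i]
  exact congrArg _ (Subtype.ext (by push_cast [hP i]; group))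

end Lim1Chain

open Lim1Chain in
/-- For a descending chain `A₀ ⊇ A₁ ⊇ ⋯` of subgroups of a group `G`, there is a
bijection between the derived limit `lim¹ Aᵢ` of the chain (with the inclusions as
bonding maps) and the orbit set `A₀ \ lim (A₀/Aᵢ)` of the left-translation action of
`A₀` on the inverse limit of the coset spaces; it sends the class of `(g₀,g₁,…)` to
the orbit of the thread `(g₀A₁, g₀g₁A₂, g₀g₁g₂A₃, …)`. -/
theorem lim1_chain_equiv_orbit_set {G : Type} [Group G]
    (A : ℕ → Subgroup G) (hA : ∀ i, A (i + 1) ≤ A i) :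
    ∃ F : Quot (chainRel A) → Quot (orbitRel A hA),
      Function.Bijective F ∧
      ∀ g : ∀ i, ↥(A i),
        F (Quot.mk (chainRel A) g) = Quot.mk (orbitRel A hA) (threadOf A hA g) := by
  refine ⟨Quot.lift (fun g => Quot.mk (orbitRel A hA) (threadOf A hA g))
      (fun g g' h => Quot.sound (thread_rel_of_chainRel A hA g g' h)),
    ⟨?_, ?_⟩, fun g => rfl⟩
  · intro a b
    induction a using Quot.ind with | _ g =>
    induction b using Quot.ind with | _ g' =>
    intro h
    have h2 := Quot.eqvGen_exact h
    rw [(orbitRel_equivalence A hA).eqvGen_iff] at h2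
    exact Quot.sound (chainRel_of_thread_rel A hA g g' h2)
  · intro q
    induction q using Quot.ind with | _ c =>
    obtain ⟨g, hg⟩ := thread_surj A hA c
    exact ⟨Quot.mk _ g, Quot.sound hg⟩
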